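/- Every entry of a permutation σ ∈ S_n is a separator if and only if n = 4k for some k ≥ 1 and σ is an inflation π[α_1, …, α_k] where π ∈ S_k and each α_i ∈ {[3142], [2413]}. -/

import Mathlib

/-- The entry at position `k` of `σ` (0-indexed) is a *vertical separator*:
there are positions `j, j+1, j+2` with `k = j+1` and `|σ j - σ (j+2)| = 1`. -/
def IsVSepPos {n : ℕ} (σ : Equiv.Perm (Fin n)) (k : Fin n) : Prop :=
  ∃ (j : ℕ) (h : j + 2 < n), (k : ℕ) = j + 1 ∧
    (((σ ⟨j, by omega⟩).val : ℤ) - ((σ ⟨j + 2, h⟩).val : ℤ)).natAbs = 1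

/-- The value `b` is a vertical separator of `σ`. -/
def IsVSepVal {n : ℕ} (σ : Equiv.Perm (Fin n)) (b : Fin n) : Prop :=
  IsVSepPos σ (σ⁻¹ b)

/-- The value `a` is a *horizontal separator* of `σ`: the values `a-1` and `a+1`
occupy adjacent positions of `σ` (their sum is `2a` and they differ by `2`). -/
def IsHSepVal {n : ℕ} (σ : Equiv.Perm (Fin n)) (a : Fin n) : Prop :=
  ∃ (j : ℕ) (h : j + 1 < n),
    (((σ ⟨j, by omega⟩).val : ℤ) - ((σ ⟨j + 1, h⟩).val : ℤ)).natAbs = 2 ∧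
    ((σ ⟨j, by omega⟩).val : ℤ) + ((σ ⟨j + 1, h⟩).val : ℤ) = 2 * (a : ℤ)

/-- `σ` has a bond at positions `j, j+1`. -/
def PermBondAt {n : ℕ} (σ : Equiv.Perm (Fin n)) (j : ℕ) (h : j + 1 < n) : Prop :=
  (((σ ⟨j, by omega⟩).val : ℤ) - ((σ ⟨j + 1, h⟩).val : ℤ)).natAbs = 1

/-- The sequence obtained from `σ` by deleting the entry at position `p`
and standardizing. -/
def delSeq {n : ℕ} (σ : Equiv.Perm (Fin n)) (p : Fin n) : Fin (n - 1) → ℕ :=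
  fun k =>
    let q : Fin n :=
      if (k : ℕ) < (p : ℕ) then ⟨k, by have := k.isLt; omega⟩
      else ⟨(k : ℕ) + 1, by have := k.isLt; omega⟩
    if (σ q).val < (σ p).val then (σ q).val else (σ q).val - 1

/-- A sequence has a bond at positions `j, j+1`. -/
def SeqBondAt {m : ℕ} (g : Fin m → ℕ) (j : ℕ) (h : j + 1 < m) : Prop :=
  ((g ⟨j, by omega⟩ : ℤ) - (g ⟨j + 1, h⟩ : ℤ)).natAbs = 1

/-- The number of bonds of a sequence. -/
noncomputable def seqBondCount {m : ℕ} (g : Fin m → ℕ) : ℕ :=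
  Nat.card {p : Fin m × Fin m //
    (p.2 : ℕ) = (p.1 : ℕ) + 1 ∧ ((g p.1 : ℤ) - (g p.2 : ℤ)).natAbs = 1}

/-- The number of bonds of `σ`. -/
noncomputable def bondCount {n : ℕ} (σ : Equiv.Perm (Fin n)) : ℕ :=
  Nat.card {p : Fin n × Fin n //
    (p.2 : ℕ) = (p.1 : ℕ) + 1 ∧ (((σ p.1).val : ℤ) - ((σ p.2).val : ℤ)).natAbs = 1}


namespace Stmt7



/-- Abstract configuration: `W` is the word of the permutation extended to `ℤ`
with sentinel `-5` outside `[0, N)`. -/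
structure Cfg (N : ℤ) (W : ℤ → ℤ) : Prop where
  npos : 0 ≤ N
  lt : ∀ u, W u < N
  range : ∀ u, 0 ≤ W u ∨ W u = -5
  valid : ∀ u, 0 ≤ W u → 0 ≤ u ∧ u < N
  inrange : ∀ u, 0 ≤ u → u < N → 0 ≤ W u
  inj : ∀ u v, W u = W v → 0 ≤ W u → u = v
  surj : ∀ b : ℤ, 0 ≤ b → b < N → ∃ u, W u = b
  sep : ∀ b : ℤ, 0 ≤ b → b < N →
    (∃ p, W p = b ∧ (W (p-1) - W (p+1)).natAbs = 1) ∨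
    (∃ p, (W p - W (p+1)).natAbs = 2 ∧ W p + W (p+1) = 2*b)

def Word1 (W : ℤ → ℤ) (m t : ℤ) : Prop :=
  W t = m+2 ∧ W (t+1) = m ∧ W (t+2) = m+3 ∧ W (t+3) = m+1

def Word2 (W : ℤ → ℤ) (m t : ℤ) : Prop :=
  W t = m+1 ∧ W (t+1) = m+3 ∧ W (t+2) = m ∧ W (t+3) = m+2

/-- What we need to know about the values below `m`. -/
def LowOK (W : ℤ → ℤ) (m : ℤ) : Prop :=
  ∀ x u, W u = x → 0 ≤ x → x < m →
    (x % 4 = 0 → (W (u-1) = x+2 ∧ W (u+1) = x+3) ∨ (W (u-1) = x+3 ∧ W (u+1) = x+2)) ∧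
    (x % 4 = 3 → (W (u-1) = x-3 ∧ W (u+1) = x-2) ∨ (W (u-1) = x-2 ∧ W (u+1) = x-3)) ∧
    (x % 4 = 1 → ∀ v, W v = x+1 → v = u+3 ∨ v = u-3)

variable {N : ℤ} {W : ℤ → ℤ}

/-- If the adjacent pair `{a,c}` occurs somewhere and `a` sits at `q`, then `c`
is a neighbour of `q`. -/
lemma force (cfg : Cfg N W) {a c q u : ℤ} (hq : W q = a) (ha : 0 ≤ a)
    (h : (W u = a ∧ W (u+1) = c) ∨ (W u = c ∧ W (u+1) = a)) :
    W (q-1) = c ∨ W (q+1) = c := by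
  rcases h with ⟨h1, h2⟩ | ⟨h1, h2⟩
  · have : u = q := cfg.inj u q (h1.trans hq.symm) (by omega)
    right; rw [← this]; exact h2
  · have : u + 1 = q := cfg.inj (u+1) q (h2.trans hq.symm) (by omega)
    left; rw [show q - 1 = u by omega]; exact h1

lemma adjH (cfg : Cfg N W) {v : ℤ} (hv : 0 ≤ v)
    (h : ∃ p, (W p - W (p+1)).natAbs = 2 ∧ W p + W (p+1) = 2*v) :
    ∃ u, (W u = v-1 ∧ W (u+1) = v+1) ∨ (W u = v+1 ∧ W (u+1) = v-1) := by
  obtain ⟨p, h1, h2⟩ := h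
  have r1 := cfg.range p
  have r2 := cfg.range (p+1)
  exact ⟨p, by omega⟩

/-- If `W q = v` then a vertical-separator witness for `v` must be centred at `q`. -/
lemma Vat (cfg : Cfg N W) {v q : ℤ} (hq : W q = v) (hv : 0 ≤ v)
    (h : ∃ p, W p = v ∧ (W (p-1) - W (p+1)).natAbs = 1) :
    (W (q-1) - W (q+1)).natAbs = 1 := by
  obtain ⟨p, hp, h1⟩ := h
  have : p = q := cfg.inj p q (hp.trans hq.symm) (by omega)
  rwa [this] at h1

lemma S1 (cfg : Cfg N W) {m b p : ℤ} (hlow : LowOK W m) (hm4 : m % 4 = 0)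
    (hb : m ≤ b) (hWp : W p = b)
    (hx : (W (p-1) - W (p+1)).natAbs = 1) :
    m ≤ W (p-1) ∧ m ≤ W (p+1) := by
  have r1 := cfg.range (p-1)
  have r2 := cfg.range (p+1)
  set x := W (p-1) with hxdef
  set y := W (p+1) with hydef
  have hx0 : 0 ≤ x := by omega
  have hy0 : 0 ≤ y := by omega
  by_contra hcon
  push_neg at hcon
  -- at least one of x, y is < m
  rcases lt_or_ge x m with hxm | hxm
  · -- x < m
    rcases lt_or_ge y m with hym | hym
    · -- both < m
      rcases Int.emod_emod_of_dvd x (by norm_num : (1:ℤ) ∣ 4) with _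
      have hx4 : x % 4 = 0 ∨ x % 4 = 1 ∨ x % 4 = 2 ∨ x % 4 = 3 := by omega
      rcases hx4 with h4 | h4 | h4 | h4
      · have := ((hlow x (p-1) rfl hx0 hxm).1 h4)
        have hpp : W ((p-1)+1) = b := by rw [show p - 1 + 1 = p by omega]; exact hWp
        omega
      · rcases (by omega : y = x + 1 ∨ y = x - 1) with hy | hy
        · have := ((hlow x (p-1) rfl hx0 hxm).2.2 h4) (p+1) (by omega)
          omega
        · -- y % 4 = 0
          have := ((hlow y (p+1) rfl hy0 hym).1 (by omega))
          have hpp : W ((p+1)-1) = b := by rw [show p + 1 - 1 = p by omega]; exact hWp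
          omega
      · rcases (by omega : y = x + 1 ∨ y = x - 1) with hy | hy
        · -- y % 4 = 3
          have := ((hlow y (p+1) rfl hy0 hym).2.1 (by omega))
          have hpp : W ((p+1)-1) = b := by rw [show p + 1 - 1 = p by omega]; exact hWp
          omega
        · -- y % 4 = 1
          have := ((hlow y (p+1) rfl hy0 hym).2.2 (by omega)) (p-1) (by omega)
          omega
      · have := ((hlow x (p-1) rfl hx0 hxm).2.1 h4)
        have hpp : W ((p-1)+1) = b := by rw [show p - 1 + 1 = p by omega]; exact hWp
        omega
    · -- x < m ≤ y : then y = x+1, x = m-1, x%4 = 3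
      have hxy : y = x + 1 := by omega
      have hxm1 : x = m - 1 := by omega
      have := ((hlow x (p-1) rfl hx0 hxm).2.1 (by omega))
      have hpp : W ((p-1)+1) = b := by rw [show p - 1 + 1 = p by omega]; exact hWp
      omega
  · rcases lt_or_ge y m with hym | hym
    · have hxy : x = y + 1 := by omega
      have hym1 : y = m - 1 := by omega
      have := ((hlow y (p+1) rfl hy0 hym).2.1 (by omega))
      have hpp : W ((p+1)-1) = b := by rw [show p + 1 - 1 = p by omega]; exact hWp
      omega
    · omega

/-- The value `m` (with everything below structured) cannot be a horizontal separator. -/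
lemma S2 (cfg : Cfg N W) {m : ℤ} (hlow : LowOK W m) (hm4 : m % 4 = 0) (hm0 : 0 ≤ m)
    (h : ∃ p, (W p - W (p+1)).natAbs = 2 ∧ W p + W (p+1) = 2*m) : False := by
  obtain ⟨u, hu⟩ := adjH cfg hm0 h
  have hm1 : 0 ≤ m - 1 := by
    rcases hu with ⟨h1, _⟩ | ⟨_, h2⟩
    · have := cfg.range u; omega
    · have := cfg.range (u+1); omega
  rcases hu with ⟨h1, h2⟩ | ⟨h1, h2⟩
  · have := ((hlow (m-1) u h1 (by omega) (by omega)).2.1 (by omega))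
    omega
  · have := ((hlow (m-1) (u+1) h2 (by omega) (by omega)).2.1 (by omega))
    have hne : W ((u+1)-1) = m+1 := by rw [show u + 1 - 1 = u by omega]; exact h1
    omega


lemma inj' (cfg : Cfg N W) {u v x : ℤ} (hu : W u = x) (hv : W v = x) (hx : 0 ≤ x) : u = v :=
  cfg.inj u v (hu.trans hv.symm) (by omega)

lemma caseA (cfg : Cfg N W) {m c : ℤ} (hlow : LowOK W m) (hm4 : m % 4 = 0) (hm0 : 0 ≤ m)
    (hc : W c = m) (h1 : W (c+1) = m+1) (h2 : W (c-1) = m+2) : False := by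
  have hN2 : m + 2 < N := h2 ▸ cfg.lt (c-1)
  have h3 : W (c+2) = m+3 := by
    rcases cfg.sep (m+2) (by omega) (by omega) with hV | hH
    · have hab := Vat cfg h2 (by omega) hV
      have hS := S1 cfg hlow hm4 (by omega) h2 hab
      rw [show c-1-1 = c-2 by ring, show c-1+1 = c by ring] at hab hS
      rw [hc] at hab
      have hcm : W (c-2) = m + 1 := by omega
      have := inj' cfg hcm h1 (by omega)
      omega
    · obtain ⟨u, hu⟩ := adjH cfg (by omega) hH
      rw [show m+2-1 = m+1 by ring, show m+2+1 = m+3 by ring] at hu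
      have hf := force cfg h1 (by omega) hu
      rw [show c+1-1 = c by ring, show c+1+1 = c+2 by ring] at hf
      rcases hf with h | h
      · omega
      · exact h
  have hN3 : m + 3 < N := h3 ▸ cfg.lt (c+2)
  have h4 : W (c-2) = m+4 := by
    rcases cfg.sep (m+3) (by omega) (by omega) with hV | hH
    · have hab := Vat cfg h3 (by omega) hV
      rw [show c+2-1 = c+1 by ring, show c+2+1 = c+3 by ring, h1] at hab
      rcases (by omega : W (c+3) = m ∨ W (c+3) = m+2) with h | h
      · have := inj' cfg h hc (by omega); omega
      · have := inj' cfg h h2 (by omega); omega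
    · obtain ⟨u, hu⟩ := adjH cfg (by omega) hH
      rw [show m+3-1 = m+2 by ring, show m+3+1 = m+4 by ring] at hu
      have hf := force cfg h2 (by omega) hu
      rw [show c-1-1 = c-2 by ring, show c-1+1 = c by ring] at hf
      rcases hf with h | h
      · exact h
      · omega
  have key : ∀ i : ℕ,
      W (c - ((i:ℤ)+1)) = m + 2*(i:ℤ) + 2 ∧ W (c + ((i:ℤ)+1)) = m + 2*(i:ℤ) + 1 ∧
      W (c - ((i:ℤ)+2)) = m + 2*(i:ℤ) + 4 ∧ W (c + ((i:ℤ)+2)) = m + 2*(i:ℤ) + 3 := by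
    intro i
    induction i with
    | zero =>
      refine ⟨?_, ?_, ?_, ?_⟩ <;> norm_num
      · exact h2
      · exact h1
      · exact h4
      · exact h3
    | succ j ih =>
      obtain ⟨A1, A2, A3, A4⟩ := ih
      have hj0 : (0:ℤ) ≤ (j:ℤ) := Int.natCast_nonneg j
      have hNb : m + 2*(j:ℤ) + 4 < N := A3 ▸ cfg.lt (c - ((j:ℤ)+2))
      have newR : W (c + ((j:ℤ)+3)) = m + 2*(j:ℤ) + 5 := by
        rcases cfg.sep (m + 2*(j:ℤ) + 4) (by omega) (by omega) with hV | hH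
        · have hab := Vat cfg A3 (by omega) hV
          rw [show c - ((j:ℤ)+2) - 1 = c - ((j:ℤ)+3) by ring,
              show c - ((j:ℤ)+2) + 1 = c - ((j:ℤ)+1) by ring, A1] at hab
          exfalso
          rcases (by omega : W (c - ((j:ℤ)+3)) = m + 2*(j:ℤ) + 1
              ∨ W (c - ((j:ℤ)+3)) = m + 2*(j:ℤ) + 3) with h | h
          · have := inj' cfg h A2 (by omega); omega
          · have := inj' cfg h A4 (by omega); omega
        · obtain ⟨u, hu⟩ := adjH cfg (by omega) hH
          rw [show m + 2*(j:ℤ) + 4 - 1 = m + 2*(j:ℤ) + 3 by ring,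
              show m + 2*(j:ℤ) + 4 + 1 = m + 2*(j:ℤ) + 5 by ring] at hu
          have hf := force cfg A4 (by omega) hu
          rw [show c + ((j:ℤ)+2) - 1 = c + ((j:ℤ)+1) by ring,
              show c + ((j:ℤ)+2) + 1 = c + ((j:ℤ)+3) by ring] at hf
          rcases hf with h | h
          · omega
          · exact h
      have hNc : m + 2*(j:ℤ) + 5 < N := newR ▸ cfg.lt (c + ((j:ℤ)+3))
      have newL : W (c - ((j:ℤ)+3)) = m + 2*(j:ℤ) + 6 := by
        rcases cfg.sep (m + 2*(j:ℤ) + 5) (by omega) (by omega) with hV | hH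
        · have hab := Vat cfg newR (by omega) hV
          rw [show c + ((j:ℤ)+3) - 1 = c + ((j:ℤ)+2) by ring,
              show c + ((j:ℤ)+3) + 1 = c + ((j:ℤ)+4) by ring, A4] at hab
          exfalso
          rcases (by omega : W (c + ((j:ℤ)+4)) = m + 2*(j:ℤ) + 2
              ∨ W (c + ((j:ℤ)+4)) = m + 2*(j:ℤ) + 4) with h | h
          · have := inj' cfg h A1 (by omega); omega
          · have := inj' cfg h A3 (by omega); omega
        · obtain ⟨u, hu⟩ := adjH cfg (by omega) hH
          rw [show m + 2*(j:ℤ) + 5 - 1 = m + 2*(j:ℤ) + 4 by ring,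
              show m + 2*(j:ℤ) + 5 + 1 = m + 2*(j:ℤ) + 6 by ring] at hu
          have hf := force cfg A3 (by omega) hu
          rw [show c - ((j:ℤ)+2) - 1 = c - ((j:ℤ)+3) by ring,
              show c - ((j:ℤ)+2) + 1 = c - ((j:ℤ)+1) by ring] at hf
          rcases hf with h | h
          · exact h
          · omega
      refine ⟨?_, ?_, ?_, ?_⟩ <;> push_cast
      · rw [show c - ((j:ℤ)+1+1) = c - ((j:ℤ)+2) by ring, A3]; ring
      · rw [show c + ((j:ℤ)+1+1) = c + ((j:ℤ)+2) by ring, A4]; ring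
      · rw [show c - ((j:ℤ)+1+2) = c - ((j:ℤ)+3) by ring, newL]; ring
      · rw [show c + ((j:ℤ)+1+2) = c + ((j:ℤ)+3) by ring, newR]; ring
  have hfin := (key N.toNat).1
  have := cfg.lt (c - ((N.toNat:ℤ)+1))
  have := cfg.npos
  omega

lemma caseC (cfg : Cfg N W) {m c d : ℤ} (hlow : LowOK W m) (hm4 : m % 4 = 0) (hm0 : 0 ≤ m)
    (hc : W c = m) (hd : W (c+1) = d) (hd1 : W (c-1) = d+1) (hdm : m+3 ≤ d) : False := by
  have hdN : d + 1 < N := hd1 ▸ cfg.lt (c-1)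
  rcases cfg.sep d (by omega) (by omega) with hV | hH
  · have hab := Vat cfg hd (by omega) hV
    have hS := S1 cfg hlow hm4 (by omega) hd hab
    rw [show c+1-1 = c by ring, show c+1+1 = c+2 by ring] at hab hS
    rw [hc] at hab
    have h21 : W (c+2) = m+1 := by omega
    rcases cfg.sep (d+1) (by omega) (by omega) with hV2 | hH2
    · have hab2 := Vat cfg hd1 (by omega) hV2
      have hS2 := S1 cfg hlow hm4 (by omega) hd1 hab2
      rw [show c-1-1 = c-2 by ring, show c-1+1 = c by ring] at hab2 hS2
      rw [hc] at hab2
      have hx : W (c-2) = m+1 := by omega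
      have := inj' cfg hx h21 (by omega)
      omega
    · obtain ⟨u, hu⟩ := adjH cfg (by omega) hH2
      rw [show d+1-1 = d by ring, show d+1+1 = d+2 by ring] at hu
      have hf := force cfg hd (by omega) hu
      rw [show c+1-1 = c by ring, show c+1+1 = c+2 by ring] at hf
      rcases hf with h | h <;> omega
  · obtain ⟨u, hu⟩ := adjH cfg (by omega) hH
    rw [show d-1 = d-1 by ring, show d+1 = d+1 by ring] at hu
    have hf := force cfg hd1 (by omega) (Or.symm hu)
    rw [show c-1-1 = c-2 by ring, show c-1+1 = c by ring] at hf
    have h5 : W (c-2) = d-1 := by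
      rcases hf with h | h
      · exact h
      · omega
    rcases cfg.sep (d+1) (by omega) (by omega) with hV2 | hH2
    · have hab2 := Vat cfg hd1 (by omega) hV2
      rw [show c-1-1 = c-2 by ring, show c-1+1 = c by ring, h5, hc] at hab2
      omega
    · obtain ⟨u2, hu2⟩ := adjH cfg (by omega) hH2
      rw [show d+1-1 = d by ring, show d+1+1 = d+2 by ring] at hu2
      have hf2 := force cfg hd (by omega) hu2
      rw [show c+1-1 = c by ring, show c+1+1 = c+2 by ring] at hf2
      have h6 : W (c+2) = d+2 := by
        rcases hf2 with h | h
        · omega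
        · exact h
      rcases cfg.sep (d-1) (by omega) (by omega) with hV3 | hH3
      · have hab3 := Vat cfg h5 (by omega) hV3
        rw [show c-2-1 = c-3 by ring, show c-2+1 = c-1 by ring, hd1] at hab3
        rcases (by omega : W (c-3) = d ∨ W (c-3) = d+2) with h | h
        · have := inj' cfg h hd (by omega); omega
        · have := inj' cfg h h6 (by omega); omega
      · obtain ⟨u3, hu3⟩ := adjH cfg (by omega) hH3
        rw [show d-1-1 = d-2 by ring, show d-1+1 = d by ring] at hu3
        have hf3 := force cfg hd (by omega) (Or.symm hu3)
        rw [show c+1-1 = c by ring, show c+1+1 = c+2 by ring] at hf3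
        rcases hf3 with h | h <;> omega

lemma caseB (cfg : Cfg N W) {m c : ℤ} (hlow : LowOK W m) (hm4 : m % 4 = 0) (hm0 : 0 ≤ m)
    (hc : W c = m) (h3 : W (c+1) = m+3) (h2 : W (c-1) = m+2) : W (c+2) = m+1 := by
  have hN3 : m+3 < N := h3 ▸ cfg.lt (c+1)
  rcases cfg.sep (m+3) (by omega) (by omega) with hV | hH
  · have hab := Vat cfg h3 (by omega) hV
    have hS := S1 cfg hlow hm4 (by omega) h3 hab
    rw [show c+1-1 = c by ring, show c+1+1 = c+2 by ring] at hab hS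
    rw [hc] at hab
    omega
  · obtain ⟨u, hu⟩ := adjH cfg (by omega) hH
    rw [show m+3-1 = m+2 by ring, show m+3+1 = m+4 by ring] at hu
    have hf := force cfg h2 (by omega) hu
    rw [show c-1-1 = c-2 by ring, show c-1+1 = c by ring] at hf
    have h4 : W (c-2) = m+4 := by
      rcases hf with h | h
      · exact h
      · omega
    rcases cfg.sep (m+2) (by omega) (by omega) with hV2 | hH2
    · have hab2 := Vat cfg h2 (by omega) hV2
      rw [show c-1-1 = c-2 by ring, show c-1+1 = c by ring, h4, hc] at hab2
      omega
    · obtain ⟨u2, hu2⟩ := adjH cfg (by omega) hH2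
      rw [show m+2-1 = m+1 by ring, show m+2+1 = m+3 by ring] at hu2
      have hf2 := force cfg h3 (by omega) (Or.symm hu2)
      rw [show c+1-1 = c by ring, show c+1+1 = c+2 by ring] at hf2
      rcases hf2 with h | h
      · omega
      · exact h

lemma Cfg.reflect (cfg : Cfg N W) : Cfg N (fun u => W (N-1-u)) where
  npos := cfg.npos
  lt u := cfg.lt _
  range u := cfg.range _
  valid u h := by have := cfg.valid _ h; omega
  inrange u h1 h2 := cfg.inrange _ (by omega) (by omega)
  inj u v h h0 := by have := cfg.inj _ _ h h0; omega
  surj b h1 h2 := by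
    obtain ⟨u, hu⟩ := cfg.surj b h1 h2
    exact ⟨N-1-u, by show W (N-1-(N-1-u)) = b; rw [show N-1-(N-1-u) = u by ring]; exact hu⟩
  sep b h1 h2 := by
    rcases cfg.sep b h1 h2 with ⟨p, hp, h⟩ | ⟨p, h, hs⟩
    · left
      refine ⟨N-1-p, ?_, ?_⟩
      · show W (N-1-(N-1-p)) = b; rw [show N-1-(N-1-p) = p by ring]; exact hp
      · show (W (N-1-(N-1-p-1)) - W (N-1-(N-1-p+1))).natAbs = 1
        rw [show N-1-(N-1-p-1) = p+1 by ring, show N-1-(N-1-p+1) = p-1 by ring]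
        omega
    · right
      refine ⟨N-2-p, ?_, ?_⟩
      · show (W (N-1-(N-2-p)) - W (N-1-(N-2-p+1))).natAbs = 2
        rw [show N-1-(N-2-p) = p+1 by ring, show N-1-(N-2-p+1) = p by ring]
        omega
      · show W (N-1-(N-2-p)) + W (N-1-(N-2-p+1)) = 2*b
        rw [show N-1-(N-2-p) = p+1 by ring, show N-1-(N-2-p+1) = p by ring]
        omega

lemma LowOK.reflect {m : ℤ} (h : LowOK W m) : LowOK (fun u => W (N-1-u)) m := by
  intro x u hx h0 hm
  obtain ⟨c0, c3, c1⟩ := h x (N-1-u) hx h0 hm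
  refine ⟨?_, ?_, ?_⟩
  · intro h4
    rcases c0 h4 with ⟨a, b⟩ | ⟨a, b⟩
    · right
      constructor
      · show W (N-1-(u-1)) = x+3; rw [show N-1-(u-1) = (N-1-u)+1 by ring]; exact b
      · show W (N-1-(u+1)) = x+2; rw [show N-1-(u+1) = (N-1-u)-1 by ring]; exact a
    · left
      constructor
      · show W (N-1-(u-1)) = x+2; rw [show N-1-(u-1) = (N-1-u)+1 by ring]; exact b
      · show W (N-1-(u+1)) = x+3; rw [show N-1-(u+1) = (N-1-u)-1 by ring]; exact a
  · intro h4
    rcases c3 h4 with ⟨a, b⟩ | ⟨a, b⟩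
    · right
      constructor
      · show W (N-1-(u-1)) = x-2; rw [show N-1-(u-1) = (N-1-u)+1 by ring]; exact b
      · show W (N-1-(u+1)) = x-3; rw [show N-1-(u+1) = (N-1-u)-1 by ring]; exact a
    · left
      constructor
      · show W (N-1-(u-1)) = x-3; rw [show N-1-(u-1) = (N-1-u)+1 by ring]; exact b
      · show W (N-1-(u+1)) = x-2; rw [show N-1-(u+1) = (N-1-u)-1 by ring]; exact a
  · intro h4 v hv
    rcases c1 h4 (N-1-v) hv with h' | h'
    · right; omega
    · left; omega

lemma keylemma (cfg : Cfg N W) {m : ℤ} (hlow : LowOK W m) (hm4 : m % 4 = 0) (hm0 : 0 ≤ m)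
    (hmN : m < N) : ∃ t, Word1 W m t ∨ Word2 W m t := by
  obtain ⟨c, hc⟩ := cfg.surj m hm0 hmN
  rcases cfg.sep m hm0 hmN with hV | hH
  swap
  · exact absurd hH (fun h => S2 cfg hlow hm4 hm0 h)
  have hab := Vat cfg hc hm0 hV
  have hS := S1 cfg hlow hm4 le_rfl hc hab
  have hxm : W (c-1) ≠ m := fun h => by have := inj' cfg h hc hm0; omega
  have hym : W (c+1) ≠ m := fun h => by have := inj' cfg h hc hm0; omega
  rcases (by omega : W (c+1) = W (c-1) + 1 ∨ W (c-1) = W (c+1) + 1) with hxy | hxy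
  · rcases (by omega : W (c-1) = m+1 ∨ W (c-1) = m+2 ∨ m+3 ≤ W (c-1)) with h | h | h
    · exfalso
      refine caseA cfg.reflect (hlow.reflect (N := N)) hm4 hm0 (c := N-1-c) ?_ ?_ ?_
      · show W (N-1-(N-1-c)) = m; rw [show N-1-(N-1-c) = c by ring]; exact hc
      · show W (N-1-(N-1-c+1)) = m+1; rw [show N-1-(N-1-c+1) = c-1 by ring]; exact h
      · show W (N-1-(N-1-c-1)) = m+2; rw [show N-1-(N-1-c-1) = c+1 by ring]; omega
    · have hB := caseB cfg hlow hm4 hm0 hc (by omega) h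
      refine ⟨c-1, Or.inl ⟨h, ?_, ?_, ?_⟩⟩
      · rw [show c-1+1 = c by ring]; exact hc
      · rw [show c-1+2 = c+1 by ring]; omega
      · rw [show c-1+3 = c+2 by ring]; exact hB
    · exfalso
      refine caseC cfg.reflect (hlow.reflect (N := N)) hm4 hm0 (c := N-1-c) (d := W (c-1)) ?_ ?_ ?_ h
      · show W (N-1-(N-1-c)) = m; rw [show N-1-(N-1-c) = c by ring]; exact hc
      · show W (N-1-(N-1-c+1)) = W (c-1); rw [show N-1-(N-1-c+1) = c-1 by ring]
      · show W (N-1-(N-1-c-1)) = W (c-1) + 1; rw [show N-1-(N-1-c-1) = c+1 by ring]; omega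
  · rcases (by omega : W (c+1) = m+1 ∨ W (c+1) = m+2 ∨ m+3 ≤ W (c+1)) with h | h | h
    · exact absurd (caseA cfg hlow hm4 hm0 hc h (by omega)) (fun h => h)
    · have hB := caseB cfg.reflect (hlow.reflect (N := N)) hm4 hm0 (c := N-1-c)
        (by show W (N-1-(N-1-c)) = m; rw [show N-1-(N-1-c) = c by ring]; exact hc)
        (by show W (N-1-(N-1-c+1)) = m+3; rw [show N-1-(N-1-c+1) = c-1 by ring]; omega)
        (by show W (N-1-(N-1-c-1)) = m+2; rw [show N-1-(N-1-c-1) = c+1 by ring]; exact h)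
      have hB' : W (c-2) = m+1 := by
        have : W (N-1-(N-1-c+2)) = m+1 := hB
        rw [show N-1-(N-1-c+2) = c-2 by ring] at this
        exact this
      refine ⟨c-2, Or.inr ⟨hB', ?_, ?_, ?_⟩⟩
      · rw [show c-2+1 = c-1 by ring]; omega
      · rw [show c-2+2 = c by ring]; exact hc
      · rw [show c-2+3 = c+1 by ring]; exact h
    · exact absurd (caseC cfg hlow hm4 hm0 hc rfl (by omega) h) (fun h => h)

lemma lowOK_of (cfg : Cfg N W) {p : ℕ}
    (hb : ∀ p' : ℕ, p' < p → ∃ t, Word1 W (4*(p':ℤ)) t ∨ Word2 W (4*(p':ℤ)) t) :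
    LowOK W (4*(p:ℤ)) := by
  intro x u hWu hx0 hxm
  obtain ⟨p', r, hp', hr, hx⟩ : ∃ (p' r : ℕ), p' < p ∧ r < 4 ∧ x = 4*(p':ℤ) + r := by
    refine ⟨x.toNat / 4, x.toNat % 4, by omega, by omega, by omega⟩
  obtain ⟨t, ht⟩ := hb p' hp'
  refine ⟨?_, ?_, ?_⟩
  · intro h4
    have hr0 : x = 4*(p':ℤ) := by omega
    rcases ht with ⟨w0, w1, w2, w3⟩ | ⟨w0, w1, w2, w3⟩
    · have hut : u = t+1 := inj' cfg hWu (by rw [w1]; omega) hx0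
      subst hut
      left
      constructor
      · rw [show t+1-1 = t by ring, w0]; omega
      · rw [show t+1+1 = t+2 by ring, w2]; omega
    · have hut : u = t+2 := inj' cfg hWu (by rw [w2]; omega) hx0
      subst hut
      right
      constructor
      · rw [show t+2-1 = t+1 by ring, w1]; omega
      · rw [show t+2+1 = t+3 by ring, w3]; omega
  · intro h4
    have hr0 : x = 4*(p':ℤ) + 3 := by omega
    rcases ht with ⟨w0, w1, w2, w3⟩ | ⟨w0, w1, w2, w3⟩
    · have hut : u = t+2 := inj' cfg hWu (by rw [w2]; omega) hx0
      subst hut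
      left
      constructor
      · rw [show t+2-1 = t+1 by ring, w1]; omega
      · rw [show t+2+1 = t+3 by ring, w3]; omega
    · have hut : u = t+1 := inj' cfg hWu (by rw [w1]; omega) hx0
      subst hut
      right
      constructor
      · rw [show t+1-1 = t by ring, w0]; omega
      · rw [show t+1+1 = t+2 by ring, w2]; omega
  · intro h4 v hv
    have hr0 : x = 4*(p':ℤ) + 1 := by omega
    rcases ht with ⟨w0, w1, w2, w3⟩ | ⟨w0, w1, w2, w3⟩
    · have hut : u = t+3 := inj' cfg hWu (by rw [w3]; omega) hx0
      have hvt : v = t := inj' cfg hv (by rw [w0]; omega) (by omega)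
      right; omega
    · have hut : u = t := inj' cfg hWu (by rw [w0]; omega) hx0
      have hvt : v = t+3 := inj' cfg hv (by rw [w3]; omega) (by omega)
      left; omega

lemma forward (cfg : Cfg N W) :
    ∃ k : ℕ, N = 4*(k:ℤ) ∧
      ∀ p' : ℕ, p' < k → ∃ t, Word1 W (4*(p':ℤ)) t ∨ Word2 W (4*(p':ℤ)) t := by
  suffices h : ∀ (j p : ℕ),
      (∀ p' : ℕ, p' < p → ∃ t, Word1 W (4*(p':ℤ)) t ∨ Word2 W (4*(p':ℤ)) t) →
      4*(p:ℤ) ≤ N → N ≤ 4*(p:ℤ) + j →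
      ∃ k : ℕ, N = 4*(k:ℤ) ∧
        ∀ p' : ℕ, p' < k → ∃ t, Word1 W (4*(p':ℤ)) t ∨ Word2 W (4*(p':ℤ)) t by
    have h0 := cfg.npos
    exact h N.toNat 0 (by omega) (by omega) (by omega)
  intro j
  induction j with
  | zero =>
    intro p hbl h1 h2
    exact ⟨p, by omega, hbl⟩
  | succ j ih =>
    intro p hbl h1 h2
    rcases eq_or_lt_of_le h1 with he | hlt
    · exact ⟨p, by omega, hbl⟩
    · obtain ⟨t, ht⟩ := keylemma cfg (lowOK_of cfg hbl) (by omega) (by omega) hlt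
      have hm3 : 4*(p:ℤ)+3 < N := by
        rcases ht with ⟨_, _, w2, _⟩ | ⟨_, w1, _, _⟩
        · have := cfg.lt (t+2); omega
        · have := cfg.lt (t+1); omega
      refine ih (p+1) ?_ (by push_cast; omega) (by push_cast; omega)
      intro p' hp'
      rcases Nat.lt_succ_iff_lt_or_eq.mp hp' with h | h
      · exact hbl p' h
      · subst h; exact ⟨t, ht⟩

lemma extract (cfg : Cfg N W) {k : ℕ} (hk : N = 4*(k:ℤ)) (t : ℕ → ℤ)
    (ht : ∀ p' : ℕ, p' < k → Word1 W (4*(p':ℤ)) (t p') ∨ Word2 W (4*(p':ℤ)) (t p')) :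
    ∀ j : ℕ, j < k → ∃ p' : ℕ, p' < k ∧
      (Word1 W (4*(p':ℤ)) (4*(j:ℤ)) ∨ Word2 W (4*(p':ℤ)) (4*(j:ℤ))) := by
  have F1 : ∀ p' : ℕ, p' < k → ∀ u, t p' ≤ u → u ≤ t p' + 3 →
      4*(p':ℤ) ≤ W u ∧ W u ≤ 4*(p':ℤ)+3 := by
    intro p' hp' u h1 h2
    rcases ht p' hp' with ⟨w0, w1, w2, w3⟩ | ⟨w0, w1, w2, w3⟩ <;>
      rcases (by omega : u = t p' ∨ u = t p' + 1 ∨ u = t p' + 2 ∨ u = t p' + 3)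
        with h | h | h | h <;> subst h <;> omega
  have tpos : ∀ p' : ℕ, p' < k → 0 ≤ t p' ∧ t p' + 3 < N := by
    intro p' hp'
    rcases ht p' hp' with ⟨w0, w1, w2, w3⟩ | ⟨w0, w1, w2, w3⟩
    · have a := cfg.valid (t p') (by omega)
      have b := cfg.valid (t p' + 3) (by omega)
      omega
    · have a := cfg.valid (t p') (by omega)
      have b := cfg.valid (t p' + 3) (by omega)
      omega
  have F2 : ∀ u, 0 ≤ u → u < N → ∃ p' : ℕ, p' < k ∧ t p' ≤ u ∧ u ≤ t p' + 3 := by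
    intro u h1 h2
    have hv0 : 0 ≤ W u := cfg.inrange u h1 h2
    have hvN : W u < N := cfg.lt u
    refine ⟨(W u).toNat / 4, by omega, ?_⟩
    set p' := (W u).toNat / 4 with hp'def
    have hp' : ((W u).toNat:ℤ) / 4 < (k:ℤ) := by omega
    have hbounds : 4*(p':ℤ) ≤ W u ∧ W u ≤ 4*(p':ℤ) + 3 := by
      constructor <;> omega
    rcases ht p' (by omega) with ⟨w0, w1, w2, w3⟩ | ⟨w0, w1, w2, w3⟩ <;>
      rcases (by omega : W u = 4*(p':ℤ) ∨ W u = 4*(p':ℤ)+1 ∨ W u = 4*(p':ℤ)+2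
          ∨ W u = 4*(p':ℤ)+3) with h | h | h | h
    · have := inj' cfg h (by rw [w1]) (by omega); omega
    · have := inj' cfg h (by rw [w3]) (by omega); omega
    · have := inj' cfg h (by rw [w0]) (by omega); omega
    · have := inj' cfg h (by rw [w2]) (by omega); omega
    · have := inj' cfg h (by rw [w2]) (by omega); omega
    · have := inj' cfg h (by rw [w0]) (by omega); omega
    · have := inj' cfg h (by rw [w3]) (by omega); omega
    · have := inj' cfg h (by rw [w1]) (by omega); omega
  have F3 : ∀ j : ℕ, j < k → ∃ p' : ℕ, p' < k ∧ t p' = 4*(j:ℤ) := by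
    intro j
    induction j using Nat.strong_induction_on with
    | _ j IH =>
      intro hj
      obtain ⟨p0, hp0, hl, hr⟩ := F2 (4*(j:ℤ)) (by omega) (by omega)
      refine ⟨p0, hp0, ?_⟩
      by_contra hne
      have hlt : t p0 < 4*(j:ℤ) := by omega
      have h0 : 0 ≤ t p0 := (tpos p0 hp0).1
      obtain ⟨p1, hp1, ht1⟩ := IH ((t p0).toNat / 4) (by omega) (by omega)
      have hF1a := F1 p1 hp1 (t p0) (by omega) (by omega)
      have hF1b := F1 p0 hp0 (t p0) (by omega) (by omega)
      have hpp : p0 = p1 := by omega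
      subst hpp
      omega
  intro j hj
  obtain ⟨p', hp', htp⟩ := F3 j hj
  refine ⟨p', hp', ?_⟩
  rcases ht p' hp' with w | w
  · left; rw [htp] at w; exact w
  · right; rw [htp] at w; exact w


noncomputable def Wp {n : ℕ} (σ : Equiv.Perm (Fin n)) : ℤ → ℤ := fun u =>
  if h : 0 ≤ u ∧ u < (n : ℤ) then ((σ ⟨u.toNat, by omega⟩).val : ℤ) else -5

lemma Wp_eq {n : ℕ} (σ : Equiv.Perm (Fin n)) (u : ℕ) (h : u < n) :
    Wp σ (u : ℤ) = ((σ ⟨u, h⟩).val : ℤ) := by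
  have hc : (0:ℤ) ≤ (u:ℤ) ∧ (u:ℤ) < (n:ℤ) := by omega
  simp only [Wp, dif_pos hc]
  congr 2

lemma val_of_W {n : ℕ} (σ : Equiv.Perm (Fin n)) (u : ℕ) (h : u < n) (v : ℕ)
    (hv : Wp σ (u : ℤ) = (v : ℤ)) : (σ ⟨u, h⟩).val = v := by
  have := Wp_eq σ u h
  omega

lemma W_of_val {n : ℕ} (σ : Equiv.Perm (Fin n)) (u : ℕ) (h : u < n) (v : ℕ)
    (hv : (σ ⟨u, h⟩).val = v) : Wp σ (u : ℤ) = (v : ℤ) := by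
  have := Wp_eq σ u h
  omega

lemma cfg_of {n : ℕ} (σ : Equiv.Perm (Fin n))
    (hs : ∀ b : Fin n, IsVSepVal σ b ∨ IsHSepVal σ b) : Cfg (n:ℤ) (Wp σ) where
  npos := by omega
  lt u := by
    unfold Wp
    split
    · rename_i h
      have := (σ ⟨u.toNat, by omega⟩).isLt
      omega
    · rename_i h
      omega
  range u := by
    unfold Wp
    split
    · left; positivity
    · right; rfl
  valid u h := by
    unfold Wp at h
    by_contra hc
    rw [dif_neg (by omega)] at h
    omega
  inrange u h1 h2 := by
    unfold Wp
    rw [dif_pos ⟨h1, h2⟩]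
    positivity
  inj u v h h0 := by
    unfold Wp at h h0
    by_cases hu : 0 ≤ u ∧ u < (n:ℤ)
    · by_cases hv : 0 ≤ v ∧ v < (n:ℤ)
      · rw [dif_pos hu] at h h0
        rw [dif_pos hv] at h
        have : (⟨u.toNat, by omega⟩ : Fin n) = ⟨v.toNat, by omega⟩ :=
          σ.injective (Fin.ext (by exact_mod_cast h))
        have huv : u.toNat = v.toNat := by simpa using congrArg Fin.val this
        omega
      · rw [dif_pos hu, dif_neg hv] at h
        rw [dif_pos hu] at h0
        omega
    · rw [dif_neg hu] at h0
      omega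
  surj b h1 h2 := by
    refine ⟨((σ⁻¹ ⟨b.toNat, by omega⟩ : Fin n) : ℕ), ?_⟩
    rw [Wp_eq σ _ (σ⁻¹ ⟨b.toNat, by omega⟩ : Fin n).isLt]
    have : σ ⟨((σ⁻¹ ⟨b.toNat, by omega⟩ : Fin n) : ℕ), (σ⁻¹ ⟨b.toNat, by omega⟩ : Fin n).isLt⟩
        = ⟨b.toNat, by omega⟩ := by
      rw [show (⟨((σ⁻¹ ⟨b.toNat, by omega⟩ : Fin n) : ℕ), _⟩ : Fin n)
          = σ⁻¹ ⟨b.toNat, by omega⟩ from rfl]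
      exact σ.apply_symm_apply _
    rw [this]
    simp only [Fin.val_mk]
    omega
  sep b h1 h2 := by
    rcases hs ⟨b.toNat, by omega⟩ with hV | hH
    · obtain ⟨j, hj, hk, hd⟩ := hV
      left
      refine ⟨(j:ℤ)+1, ?_, ?_⟩
      · rw [show (j:ℤ)+1 = ((j+1:ℕ):ℤ) by push_cast; ring, Wp_eq σ (j+1) (by omega)]
        have : (⟨j+1, by omega⟩ : Fin n) = σ⁻¹ ⟨b.toNat, by omega⟩ :=
          Fin.ext (by simp only [Fin.val_mk]; omega)
        rw [this, ← Equiv.Perm.mul_apply, mul_inv_cancel, Equiv.Perm.one_apply]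
        simp only [Fin.val_mk]
        omega
      · rw [show (j:ℤ)+1-1 = ((j:ℕ):ℤ) by push_cast; ring,
            show (j:ℤ)+1+1 = ((j+2:ℕ):ℤ) by push_cast; ring,
            Wp_eq σ j (by omega), Wp_eq σ (j+2) (by omega)]
        exact hd
    · obtain ⟨j, hj, hd, hsum⟩ := hH
      right
      refine ⟨(j:ℤ), ?_, ?_⟩
      · rw [show (j:ℤ)+1 = ((j+1:ℕ):ℤ) by push_cast; ring,
            Wp_eq σ j (by omega), Wp_eq σ (j+1) (by omega)]
        exact hd
      · rw [show (j:ℤ)+1 = ((j+1:ℕ):ℤ) by push_cast; ring,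
            Wp_eq σ j (by omega), Wp_eq σ (j+1) (by omega)]
        rw [hsum]
        simp only [Fin.val_mk]
        omega



set_option maxHeartbeats 1000000 in
lemma fwd {n : ℕ} (hn : 0 < n) (σ : Equiv.Perm (Fin n))
    (hs : ∀ b : Fin n, IsVSepVal σ b ∨ IsHSepVal σ b) :
    ∃ k : ℕ, 0 < k ∧ n = 4 * k ∧
      ∃ (π : Equiv.Perm (Fin k)) (α : Fin k → (Fin 4 → Fin 4)),
        (∀ q, α q = ![2, 0, 3, 1] ∨ α q = ![1, 3, 0, 2]) ∧
        ∀ (q : Fin k) (r : Fin 4) (h : 4 * (q : ℕ) + (r : ℕ) < n),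
          (σ ⟨4 * (q : ℕ) + (r : ℕ), h⟩).val = 4 * (π q : ℕ) + (α q r : ℕ) := by
  classical
  have cfg := Stmt7.cfg_of σ hs
  obtain ⟨k, hk, hbl⟩ := Stmt7.forward cfg
  have hkn : n = 4 * k := by omega
  have hbl' : ∀ p' : ℕ, ∃ t, p' < k →
      (Stmt7.Word1 (Stmt7.Wp σ) (4*(p':ℤ)) t ∨ Stmt7.Word2 (Stmt7.Wp σ) (4*(p':ℤ)) t) := by
    intro p'
    by_cases h : p' < k
    · obtain ⟨t, ht⟩ := hbl p' h; exact ⟨t, fun _ => ht⟩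
    · exact ⟨0, fun hc => absurd hc h⟩
  choose t ht using hbl'
  have EX := Stmt7.extract cfg hk t (fun p' hp' => ht p' hp')
  have EX' : ∀ j : ℕ, ∃ p' : ℕ, j < k →
      (p' < k ∧ (Stmt7.Word1 (Stmt7.Wp σ) (4*(p':ℤ)) (4*(j:ℤ)) ∨
        Stmt7.Word2 (Stmt7.Wp σ) (4*(p':ℤ)) (4*(j:ℤ)))) := by
    intro j
    by_cases h : j < k
    · obtain ⟨p', h1, h2⟩ := EX j h; exact ⟨p', fun _ => ⟨h1, h2⟩⟩
    · exact ⟨0, fun hc => absurd hc h⟩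
  choose P hP using EX'
  have hPinj : ∀ j1 j2 : ℕ, j1 < k → j2 < k → P j1 = P j2 → j1 = j2 := by
    intro j1 j2 h1 h2 he
    obtain ⟨hk1, hw1⟩ := hP j1 h1
    obtain ⟨hk2, hw2⟩ := hP j2 h2
    rw [he] at hw1
    rcases hw1 with ⟨a0,a1,a2,a3⟩ | ⟨a0,a1,a2,a3⟩ <;>
      rcases hw2 with ⟨b0,b1,b2,b3⟩ | ⟨b0,b1,b2,b3⟩
    · have := Stmt7.inj' cfg a0 b0 (by omega); omega
    · have := Stmt7.inj' cfg a0 b3 (by omega); omega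
    · have := Stmt7.inj' cfg a3 b0 (by omega); omega
    · have := Stmt7.inj' cfg a0 b0 (by omega); omega
  set G : Fin k → Fin k := fun j => ⟨P j.val, (hP j.val j.2).1⟩ with hG
  have hGinj : Function.Injective G := by
    intro a b hab
    have : P a.val = P b.val := congrArg Fin.val hab
    exact Fin.ext (hPinj a.val b.val a.2 b.2 this)
  have hGbij : Function.Bijective G := Finite.injective_iff_bijective.mp hGinj
  refine ⟨k, by omega, hkn, Equiv.ofBijective G hGbij,
    fun q => if Stmt7.Word1 (Stmt7.Wp σ) (4*((P q.val):ℤ)) (4*((q.val):ℤ))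
      then ![2,0,3,1] else ![1,3,0,2], ?_, ?_⟩
  · intro q
    dsimp only
    split
    · left; rfl
    · right; rfl
  · intro q r h
    dsimp only
    have hπ : ((Equiv.ofBijective G hGbij) q : ℕ) = P q.val := rfl
    rw [hπ]
    obtain ⟨hk1, hw⟩ := hP q.val q.2
    by_cases hW : Stmt7.Word1 (Stmt7.Wp σ) (4*((P q.val):ℤ)) (4*((q.val):ℤ))
    · rw [if_pos hW]
      obtain ⟨w0, w1, w2, w3⟩ := hW
      obtain ⟨rv, hrv⟩ := r
      interval_cases rv
      · exact Stmt7.val_of_W σ (4*q.val) (by omega) (4*(P q.val)+2) (by push_cast; exact w0)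
      · exact Stmt7.val_of_W σ (4*q.val+1) (by omega) (4*(P q.val)) (by push_cast; exact w1)
      · exact Stmt7.val_of_W σ (4*q.val+2) (by omega) (4*(P q.val)+3) (by push_cast; exact w2)
      · exact Stmt7.val_of_W σ (4*q.val+3) (by omega) (4*(P q.val)+1) (by push_cast; exact w3)
    · rw [if_neg hW]
      have hw2 : Stmt7.Word2 (Stmt7.Wp σ) (4*((P q.val):ℤ)) (4*((q.val):ℤ)) := by
        rcases hw with h' | h'
        · exact absurd h' hW
        · exact h'
      obtain ⟨w0, w1, w2, w3⟩ := hw2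
      obtain ⟨rv, hrv⟩ := r
      interval_cases rv
      · exact Stmt7.val_of_W σ (4*q.val) (by omega) (4*(P q.val)+1) (by push_cast; exact w0)
      · exact Stmt7.val_of_W σ (4*q.val+1) (by omega) (4*(P q.val)+3) (by push_cast; exact w1)
      · exact Stmt7.val_of_W σ (4*q.val+2) (by omega) (4*(P q.val)) (by push_cast; exact w2)
      · exact Stmt7.val_of_W σ (4*q.val+3) (by omega) (4*(P q.val)+2) (by push_cast; exact w3)


set_option maxHeartbeats 1000000 in
lemma reverse {n : ℕ} (σ : Equiv.Perm (Fin n))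
    (H : ∃ k : ℕ, 0 < k ∧ n = 4 * k ∧
        ∃ (π : Equiv.Perm (Fin k)) (α : Fin k → (Fin 4 → Fin 4)),
          (∀ q, α q = ![2, 0, 3, 1] ∨ α q = ![1, 3, 0, 2]) ∧
          ∀ (q : Fin k) (r : Fin 4) (h : 4 * (q : ℕ) + (r : ℕ) < n),
            (σ ⟨4 * (q : ℕ) + (r : ℕ), h⟩).val = 4 * (π q : ℕ) + (α q r : ℕ)) :
    ∀ b : Fin n, IsVSepVal σ b ∨ IsHSepVal σ b := by
  obtain ⟨k, k0, hkn, π, α, hα, hσ⟩ := H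
  intro b
  have hb4 : b.val / 4 < k := by have := b.isLt; omega
  obtain ⟨q, hπq⟩ : ∃ q : Fin k, π q = ⟨b.val/4, hb4⟩ :=
    ⟨π.symm ⟨b.val/4, hb4⟩, Equiv.apply_symm_apply π _⟩
  have hqk : q.val < k := q.2
  have hq3 : 4*q.val + 3 < n := by omega
  have e : ∀ (u : ℕ) (hu : u < n) (i : ℕ) (hi : i < 4), u = 4*q.val + i →
      (σ ⟨u, hu⟩).val = 4*(b.val/4) + (α q ⟨i, hi⟩).val := by
    intro u hu i hi he
    subst he
    have h2 := hσ q ⟨i, hi⟩ (by simp only [Fin.val_mk]; omega)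
    rw [hπq] at h2
    simp only [Fin.val_mk] at h2
    exact h2
  clear hσ hπq hb4
  rcases hα q with hA | hA <;> clear hα <;>
    rcases (by omega : b.val % 4 = 0 ∨ b.val % 4 = 1 ∨ b.val % 4 = 2 ∨ b.val % 4 = 3)
      with hs0 | hs0 | hs0 | hs0
  · left
    have hvc : ((α q ⟨1, by norm_num⟩ : Fin 4) : ℕ) = 0 := by rw [hA]; rfl
    have hvl : ((α q ⟨0, by norm_num⟩ : Fin 4) : ℕ) = 2 := by rw [hA]; rfl
    have hvr : ((α q ⟨2, by norm_num⟩ : Fin 4) : ℕ) = 3 := by rw [hA]; rfl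
    have hj0 : 4*q.val+0 < n := by omega
    have hj2 : 4*q.val+0+2 < n := by omega
    have hnat : (((σ ⟨4*q.val+0, hj0⟩).val : ℤ) - ((σ ⟨4*q.val+0+2, hj2⟩).val : ℤ)).natAbs = 1 := by
      rw [e (4*q.val+0) hj0 0 (by norm_num) (by omega), hvl,
          e (4*q.val+0+2) hj2 2 (by norm_num) (by omega), hvr]
      omega
    have hb : σ ⟨4*q.val+1, by omega⟩ = b := by
      apply Fin.ext
      rw [e (4*q.val+1) (by omega) 1 (by norm_num) (by omega), hvc]
      omega
    have hinv : σ⁻¹ b = ⟨4*q.val+1, by omega⟩ := by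
      rw [Equiv.Perm.inv_def, Equiv.symm_apply_eq]
      exact hb.symm
    unfold IsVSepVal IsVSepPos
    exact ⟨4*q.val+0, hj2, by rw [hinv], hnat⟩
  · right
    have hva : ((α q ⟨0, by norm_num⟩ : Fin 4) : ℕ) = 2 := by rw [hA]; rfl
    have hvb : ((α q ⟨1, by norm_num⟩ : Fin 4) : ℕ) = 0 := by rw [hA]; rfl
    unfold IsHSepVal
    refine ⟨4*q.val+0, by omega, ?_, ?_⟩ <;>
      rw [e (4*q.val+0) (by omega) 0 (by norm_num) (by omega), hva,
          e (4*q.val+0+1) (by omega) 1 (by norm_num) (by omega), hvb] <;>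
      omega
  · right
    have hva : ((α q ⟨2, by norm_num⟩ : Fin 4) : ℕ) = 3 := by rw [hA]; rfl
    have hvb : ((α q ⟨3, by norm_num⟩ : Fin 4) : ℕ) = 1 := by rw [hA]; rfl
    unfold IsHSepVal
    refine ⟨4*q.val+2, by omega, ?_, ?_⟩ <;>
      rw [e (4*q.val+2) (by omega) 2 (by norm_num) (by omega), hva,
          e (4*q.val+2+1) (by omega) 3 (by norm_num) (by omega), hvb] <;>
      omega
  · left
    have hvc : ((α q ⟨2, by norm_num⟩ : Fin 4) : ℕ) = 3 := by rw [hA]; rfl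
    have hvl : ((α q ⟨1, by norm_num⟩ : Fin 4) : ℕ) = 0 := by rw [hA]; rfl
    have hvr : ((α q ⟨3, by norm_num⟩ : Fin 4) : ℕ) = 1 := by rw [hA]; rfl
    have hj0 : 4*q.val+1 < n := by omega
    have hj2 : 4*q.val+1+2 < n := by omega
    have hnat : (((σ ⟨4*q.val+1, hj0⟩).val : ℤ) - ((σ ⟨4*q.val+1+2, hj2⟩).val : ℤ)).natAbs = 1 := by
      rw [e (4*q.val+1) hj0 1 (by norm_num) (by omega), hvl,
          e (4*q.val+1+2) hj2 3 (by norm_num) (by omega), hvr]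
      omega
    have hb : σ ⟨4*q.val+2, by omega⟩ = b := by
      apply Fin.ext
      rw [e (4*q.val+2) (by omega) 2 (by norm_num) (by omega), hvc]
      omega
    have hinv : σ⁻¹ b = ⟨4*q.val+2, by omega⟩ := by
      rw [Equiv.Perm.inv_def, Equiv.symm_apply_eq]
      exact hb.symm
    unfold IsVSepVal IsVSepPos
    exact ⟨4*q.val+1, hj2, by rw [hinv], hnat⟩
  · left
    have hvc : ((α q ⟨2, by norm_num⟩ : Fin 4) : ℕ) = 0 := by rw [hA]; rfl
    have hvl : ((α q ⟨1, by norm_num⟩ : Fin 4) : ℕ) = 3 := by rw [hA]; rfl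
    have hvr : ((α q ⟨3, by norm_num⟩ : Fin 4) : ℕ) = 2 := by rw [hA]; rfl
    have hj0 : 4*q.val+1 < n := by omega
    have hj2 : 4*q.val+1+2 < n := by omega
    have hnat : (((σ ⟨4*q.val+1, hj0⟩).val : ℤ) - ((σ ⟨4*q.val+1+2, hj2⟩).val : ℤ)).natAbs = 1 := by
      rw [e (4*q.val+1) hj0 1 (by norm_num) (by omega), hvl,
          e (4*q.val+1+2) hj2 3 (by norm_num) (by omega), hvr]
      omega
    have hb : σ ⟨4*q.val+2, by omega⟩ = b := by
      apply Fin.ext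
      rw [e (4*q.val+2) (by omega) 2 (by norm_num) (by omega), hvc]
      omega
    have hinv : σ⁻¹ b = ⟨4*q.val+2, by omega⟩ := by
      rw [Equiv.Perm.inv_def, Equiv.symm_apply_eq]
      exact hb.symm
    unfold IsVSepVal IsVSepPos
    exact ⟨4*q.val+1, hj2, by rw [hinv], hnat⟩
  · right
    have hva : ((α q ⟨2, by norm_num⟩ : Fin 4) : ℕ) = 0 := by rw [hA]; rfl
    have hvb : ((α q ⟨3, by norm_num⟩ : Fin 4) : ℕ) = 2 := by rw [hA]; rfl
    unfold IsHSepVal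
    refine ⟨4*q.val+2, by omega, ?_, ?_⟩ <;>
      rw [e (4*q.val+2) (by omega) 2 (by norm_num) (by omega), hva,
          e (4*q.val+2+1) (by omega) 3 (by norm_num) (by omega), hvb] <;>
      omega
  · right
    have hva : ((α q ⟨0, by norm_num⟩ : Fin 4) : ℕ) = 1 := by rw [hA]; rfl
    have hvb : ((α q ⟨1, by norm_num⟩ : Fin 4) : ℕ) = 3 := by rw [hA]; rfl
    unfold IsHSepVal
    refine ⟨4*q.val+0, by omega, ?_, ?_⟩ <;>
      rw [e (4*q.val+0) (by omega) 0 (by norm_num) (by omega), hva,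
          e (4*q.val+0+1) (by omega) 1 (by norm_num) (by omega), hvb] <;>
      omega
  · left
    have hvc : ((α q ⟨1, by norm_num⟩ : Fin 4) : ℕ) = 3 := by rw [hA]; rfl
    have hvl : ((α q ⟨0, by norm_num⟩ : Fin 4) : ℕ) = 1 := by rw [hA]; rfl
    have hvr : ((α q ⟨2, by norm_num⟩ : Fin 4) : ℕ) = 0 := by rw [hA]; rfl
    have hj0 : 4*q.val+0 < n := by omega
    have hj2 : 4*q.val+0+2 < n := by omega
    have hnat : (((σ ⟨4*q.val+0, hj0⟩).val : ℤ) - ((σ ⟨4*q.val+0+2, hj2⟩).val : ℤ)).natAbs = 1 := by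
      rw [e (4*q.val+0) hj0 0 (by norm_num) (by omega), hvl,
          e (4*q.val+0+2) hj2 2 (by norm_num) (by omega), hvr]
      omega
    have hb : σ ⟨4*q.val+1, by omega⟩ = b := by
      apply Fin.ext
      rw [e (4*q.val+1) (by omega) 1 (by norm_num) (by omega), hvc]
      omega
    have hinv : σ⁻¹ b = ⟨4*q.val+1, by omega⟩ := by
      rw [Equiv.Perm.inv_def, Equiv.symm_apply_eq]
      exact hb.symm
    unfold IsVSepVal IsVSepPos
    exact ⟨4*q.val+0, hj2, by rw [hinv], hnat⟩


end Stmt7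

/-- every entry of `σ ∈ S_n` is a separator iff `n = 4k` (`k ≥ 1`)
and `σ` is an inflation `π[α₁,…,α_k]` with `π ∈ S_k` and each
`αᵢ ∈ {[3142],[2413]}` (0-indexed: `![2,0,3,1]` or `![1,3,0,2]`). -/
theorem stmt7 {n : ℕ} (hn : 0 < n) (σ : Equiv.Perm (Fin n)) :
    (∀ b : Fin n, IsVSepVal σ b ∨ IsHSepVal σ b) ↔
      ∃ k : ℕ, 0 < k ∧ n = 4 * k ∧
        ∃ (π : Equiv.Perm (Fin k)) (α : Fin k → (Fin 4 → Fin 4)),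
          (∀ q, α q = ![2, 0, 3, 1] ∨ α q = ![1, 3, 0, 2]) ∧
          ∀ (q : Fin k) (r : Fin 4) (h : 4 * (q : ℕ) + (r : ℕ) < n),
            (σ ⟨4 * (q : ℕ) + (r : ℕ), h⟩).val = 4 * (π q : ℕ) + (α q r : ℕ) := by
  exact ⟨Stmt7.fwd hn σ, Stmt7.reverse σ⟩
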